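/- Let λ₁, λ₂ be distinct real numbers with 0 < |λ_i| < 1 and s₁, s₂ integers with S = |s₁+s₂|. Then lim_{n→∞} (1/n) ∑_{i,j=1}^n λ₁^{|i-j-s₁|} λ₂^{|j-i-s₂|} = λ₁^{S+1}(1-λ₂²)/((λ₁-λ₂)(1-λ₁λ₂)) + λ₂^{S+1}(1-λ₁²)/((λ₂-λ₁)(1-λ₁λ₂)). -/

import Mathlib

open Filter Finset

/-- Key computation: the bilateral sum ∑_{e ∈ ℤ} λ₁^{|e|} λ₂^{|e-S|} for S : ℕ. -/
lemma hasSum_key (lam1 lam2 : ℝ) (h1 : |lam1| < 1) (h2 : |lam2| < 1)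
    (hne : lam1 ≠ lam2) (S : ℕ) :
    HasSum (fun e : ℤ => lam1 ^ e.natAbs * lam2 ^ (e - (S : ℤ)).natAbs)
      (lam1 ^ (S + 1) * (1 - lam2 ^ 2) / ((lam1 - lam2) * (1 - lam1 * lam2))
        + lam2 ^ (S + 1) * (1 - lam1 ^ 2) / ((lam2 - lam1) * (1 - lam1 * lam2))) := by
  have habs : |lam1 * lam2| < 1 := by
    rw [abs_mul]
    calc |lam1| * |lam2| ≤ |lam1| * 1 := by
          exact mul_le_mul_of_nonneg_left h2.le (abs_nonneg _)
      _ = |lam1| := mul_one _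
      _ < 1 := h1
  have hD : (1 : ℝ) - lam1 * lam2 ≠ 0 := by
    have : lam1 * lam2 < 1 := (abs_lt.mp habs).2
    linarith
  have hsub : lam1 - lam2 ≠ 0 := sub_ne_zero.mpr hne
  have hsub' : lam2 - lam1 ≠ 0 := sub_ne_zero.mpr (Ne.symm hne)
  have hgeom : HasSum (fun n : ℕ => (lam1 * lam2) ^ n) (1 - lam1 * lam2)⁻¹ :=
    hasSum_geometric_of_norm_lt_one (by rwa [Real.norm_eq_abs])
  set f : ℤ → ℝ := fun e => lam1 ^ e.natAbs * lam2 ^ (e - (S : ℤ)).natAbs with hf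
  -- negative part
  have hneg : HasSum (fun n : ℕ => f (-(n + 1)))
      (lam1 * lam2 ^ (S + 1) * (1 - lam1 * lam2)⁻¹) := by
    have := hgeom.mul_left (lam1 * lam2 ^ (S + 1))
    refine this.congr_fun fun n => ?_
    have e1 : ((-(n + 1) : ℤ)).natAbs = n + 1 := by omega
    have e2 : ((-(n + 1) : ℤ) - (S : ℤ)).natAbs = n + 1 + S := by omega
    simp only [hf]
    rw [e1, e2]
    ring
  -- nonnegative part, shifted by S
  have hshift : HasSum (fun n : ℕ => f ((n : ℤ) + S))
      (lam1 ^ S * (1 - lam1 * lam2)⁻¹) := by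
    have := hgeom.mul_left (lam1 ^ S)
    refine this.congr_fun fun n => ?_
    have e1 : (((n : ℤ) + S)).natAbs = n + S := by omega
    have e2 : (((n : ℤ) + S) - (S : ℤ)).natAbs = n := by omega
    simp only [hf]
    rw [e1, e2]
    ring
  have hshift' : HasSum (fun n : ℕ => f ((n + S : ℕ) : ℤ))
      (lam1 ^ S * (1 - lam1 * lam2)⁻¹) := by
    refine hshift.congr_fun fun n => ?_
    simp only [hf]
    norm_cast
  have hnonneg : HasSum (fun n : ℕ => f n)
      (lam1 ^ S * (1 - lam1 * lam2)⁻¹ + ∑ i ∈ range S, f i) :=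
    (hasSum_nat_add_iff (f := fun n : ℕ => f n) S).mp hshift'
  have htotal : HasSum f
      ((lam1 ^ S * (1 - lam1 * lam2)⁻¹ + ∑ i ∈ range S, f i)
        + lam1 * lam2 ^ (S + 1) * (1 - lam1 * lam2)⁻¹) :=
    hnonneg.of_nat_of_neg_add_one hneg
  -- compute the finite sum
  have hfin : (∑ i ∈ range S, f i) * (lam1 - lam2) = (lam1 ^ S - lam2 ^ S) * lam2 := by
    have hcongr : ∑ i ∈ range S, f i = (∑ i ∈ range S, lam1 ^ i * lam2 ^ (S - 1 - i)) * lam2 := by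
      rw [sum_mul]
      refine sum_congr rfl fun i hi => ?_
      rw [mem_range] at hi
      have e1 : ((i : ℤ) - (S : ℤ)).natAbs = S - 1 - i + 1 := by omega
      simp only [hf]
      have e2 : ((i : ℕ) : ℤ).natAbs = i := by omega
      rw [e1, e2, pow_succ]
      ring
    rw [hcongr, mul_right_comm, geom_sum₂_mul]
  have hF : (∑ i ∈ range S, f i) = (lam1 ^ S - lam2 ^ S) * lam2 / (lam1 - lam2) := by
    rw [eq_div_iff hsub]; exact hfin
  convert htotal using 1
  rw [hF]
  rw [pow_succ, pow_succ]
  field_simp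
  ring

/-- General shift: sum over ℤ of λ₁^{|e|} λ₂^{|e+σ|}. -/
lemma hasSum_shift (lam1 lam2 : ℝ) (h1 : |lam1| < 1) (h2 : |lam2| < 1)
    (hne : lam1 ≠ lam2) (σ : ℤ) :
    HasSum (fun e : ℤ => lam1 ^ e.natAbs * lam2 ^ (e + σ).natAbs)
      (lam1 ^ (σ.natAbs + 1) * (1 - lam2 ^ 2) / ((lam1 - lam2) * (1 - lam1 * lam2))
        + lam2 ^ (σ.natAbs + 1) * (1 - lam1 ^ 2) / ((lam2 - lam1) * (1 - lam1 * lam2))) := by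
  have hkey := hasSum_key lam1 lam2 h1 h2 hne σ.natAbs
  rcases le_or_gt σ 0 with hσ | hσ
  · refine hkey.congr_fun fun e => ?_
    congr 2
    omega
  · refine (Equiv.neg ℤ).hasSum_iff.mp ?_
    refine hkey.congr_fun fun e => ?_
    simp only [Function.comp_apply, Equiv.neg_apply]
    congr 2
    · omega
    · omega

/-- Combinatorial step: enlarging the square from n to n+1 adds ∑_{|d| ≤ n} g d. -/
lemma sum_step (g : ℤ → ℝ) (n : ℕ) :
    ∑ i ∈ Finset.Icc (1 : ℤ) ((n : ℤ) + 1), ∑ j ∈ Finset.Icc (1 : ℤ) ((n : ℤ) + 1), g (i - j)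
      = (∑ i ∈ Finset.Icc (1 : ℤ) (n : ℤ), ∑ j ∈ Finset.Icc (1 : ℤ) (n : ℤ), g (i - j))
        + ∑ d ∈ Finset.Icc (-(n : ℤ)) (n : ℤ), g d := by
  have hins : Finset.Icc (1 : ℤ) ((n : ℤ) + 1) = insert ((n : ℤ) + 1) (Finset.Icc 1 (n : ℤ)) := by
    ext x; simp only [Finset.mem_Icc, Finset.mem_insert]; omega
  have hnotmem : ((n : ℤ) + 1) ∉ Finset.Icc (1 : ℤ) (n : ℤ) := by
    simp only [Finset.mem_Icc]; omega
  rw [hins, Finset.sum_insert hnotmem]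
  have hrow : ∑ j ∈ insert ((n : ℤ) + 1) (Finset.Icc 1 (n : ℤ)), g ((n : ℤ) + 1 - j)
      = ∑ d ∈ Finset.Icc (0 : ℤ) (n : ℤ), g d := by
    rw [← hins]
    refine Finset.sum_nbij' (fun j => (n : ℤ) + 1 - j) (fun d => (n : ℤ) + 1 - d) ?_ ?_ ?_ ?_ ?_
    · intro a ha; simp only [Finset.mem_Icc] at *; omega
    · intro a ha; simp only [Finset.mem_Icc] at *; omega
    · intro a _; ring
    · intro a _; ring
    · intro a _; rfl
  have hcol : ∑ i ∈ Finset.Icc (1 : ℤ) (n : ℤ), g (i - ((n : ℤ) + 1))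
      = ∑ d ∈ Finset.Icc (-(n : ℤ)) (-1 : ℤ), g d := by
    refine Finset.sum_nbij' (fun i => i - ((n : ℤ) + 1)) (fun d => d + ((n : ℤ) + 1)) ?_ ?_ ?_ ?_ ?_
    · intro a ha; simp only [Finset.mem_Icc] at *; omega
    · intro a ha; simp only [Finset.mem_Icc] at *; omega
    · intro a _; ring
    · intro a _; ring
    · intro a _; rfl
  have hunion : Finset.Icc (-(n : ℤ)) (n : ℤ)
      = Finset.Icc (-(n : ℤ)) (-1 : ℤ) ∪ Finset.Icc (0 : ℤ) (n : ℤ) := by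
    ext x; simp only [Finset.mem_Icc, Finset.mem_union]; omega
  have hdisj : Disjoint (Finset.Icc (-(n : ℤ)) (-1 : ℤ)) (Finset.Icc (0 : ℤ) (n : ℤ)) := by
    rw [Finset.disjoint_left]
    intro a ha hb
    simp only [Finset.mem_Icc] at ha hb
    omega
  have hsplit : ∀ i ∈ Finset.Icc (1 : ℤ) (n : ℤ),
      (∑ j ∈ insert ((n : ℤ) + 1) (Finset.Icc 1 (n : ℤ)), g (i - j))
        = g (i - ((n : ℤ) + 1)) + ∑ j ∈ Finset.Icc (1 : ℤ) (n : ℤ), g (i - j) :=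
    fun i _ => Finset.sum_insert hnotmem
  rw [Finset.sum_congr rfl hsplit, Finset.sum_add_distrib, hrow, hcol, hunion,
    Finset.sum_union hdisj]
  ring

/-- k = 2 case of the main theorem:
lim (1/n) ∑_{i,j=1}^n λ₁^{|i-j-s₁|} λ₂^{|j-i-s₂|}
  = λ₁^{S+1}(1-λ₂²)/((λ₁-λ₂)(1-λ₁λ₂)) + λ₂^{S+1}(1-λ₁²)/((λ₂-λ₁)(1-λ₁λ₂)). -/
theorem stmt12 (lam1 lam2 : ℝ) (h1 : |lam1| < 1) (h2 : |lam2| < 1)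
    (h1' : lam1 ≠ 0) (h2' : lam2 ≠ 0) (hne : lam1 ≠ lam2) (s1 s2 : ℤ) :
    Tendsto (fun n : ℕ =>
        (1 / (n : ℝ)) *
          ∑ i ∈ Finset.Icc (1 : ℤ) n, ∑ j ∈ Finset.Icc (1 : ℤ) n,
            lam1 ^ (i - j - s1).natAbs * lam2 ^ (j - i - s2).natAbs)
      atTop
      (nhds (lam1 ^ ((s1 + s2).natAbs + 1) * (1 - lam2 ^ 2)
              / ((lam1 - lam2) * (1 - lam1 * lam2))
            + lam2 ^ ((s1 + s2).natAbs + 1) * (1 - lam1 ^ 2)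
              / ((lam2 - lam1) * (1 - lam1 * lam2)))) := by
  set T := lam1 ^ ((s1 + s2).natAbs + 1) * (1 - lam2 ^ 2)
      / ((lam1 - lam2) * (1 - lam1 * lam2))
    + lam2 ^ ((s1 + s2).natAbs + 1) * (1 - lam1 ^ 2)
      / ((lam2 - lam1) * (1 - lam1 * lam2)) with hT
  set f : ℤ → ℝ := fun d => lam1 ^ (d - s1).natAbs * lam2 ^ (d + s2).natAbs with hfdef
  have hσ := hasSum_shift lam1 lam2 h1 h2 hne (s1 + s2)
  have hf : HasSum f T := by
    refine (Equiv.addRight s1).hasSum_iff.mp ?_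
    refine hσ.congr_fun fun e => ?_
    simp only [hfdef, Function.comp_apply, Equiv.coe_addRight]
    congr 2
    · omega
    · omega
  set u : ℕ → ℝ := fun k => ∑ d ∈ Finset.Icc (-(k : ℤ)) (k : ℤ), f d with hu
  have hIcc : Tendsto (fun k : ℕ => Finset.Icc (-(k : ℤ)) (k : ℤ)) atTop atTop := by
    apply tendsto_atTop_finset_of_monotone
    · intro a b hab
      apply Finset.Icc_subset_Icc <;> omega
    · intro x
      exact ⟨x.natAbs, by simp only [Finset.mem_Icc]; omega⟩
  have htend_u : Tendsto u atTop (nhds T) := hf.comp hIcc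
  have hcesaro := htend_u.cesaro
  refine hcesaro.congr fun n => ?_
  rw [one_div]
  congr 1
  have key : ∀ m : ℕ, ∑ i ∈ Finset.range m, u i
      = ∑ i ∈ Finset.Icc (1 : ℤ) (m : ℤ), ∑ j ∈ Finset.Icc (1 : ℤ) (m : ℤ), f (i - j) := by
    intro m
    induction m with
    | zero => simp
    | succ k ih =>
      rw [Finset.sum_range_succ, ih, hu]
      push_cast
      rw [sum_step f k]
  rw [key n]
  refine Finset.sum_congr rfl fun i _ => Finset.sum_congr rfl fun j _ => ?_
  simp only [hfdef]
  congr 2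
  omega
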